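/- arXiv:1903.11152 — 2 statements merged into one kernel-verified Lean document; each statement's English description precedes it below -/
import Mathlib

section
/- Let c > 0, let α, α' be Borel probability measures on 𝕋^d × U with finite second moments, and let η be a Borel probability measure on 𝕋^d × U × B_c (B_c the closed ball of radius c in ℝ^d) whose marginal on 𝕋^d × U equals α. For τ, θ > 0 define Ξ^τ(x,u,w) := (x + τw, u). Let π be an optimal W₂-plan between α' and α and set η' := π∗η. Then W₂(Ξ^τ_#η, Ξ^θ_#η') ≤ W₂(α,α') + |τ − θ|·c. -/
noncomputable def intLattice (d : ℕ) : AddSubgroup (EuclideanSpace ℝ (Fin d)) where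
  carrier := {v | ∀ i, ∃ n : ℤ, v i = (n : ℝ)}
  zero_mem' := fun i => ⟨0, by simp⟩
  add_mem' := by
    intro a b ha hb i
    obtain ⟨n, hn⟩ := ha i
    obtain ⟨m, hm⟩ := hb i
    exact ⟨n + m, by simp [hn, hm]⟩
  neg_mem' := by
    intro a ha i
    obtain ⟨n, hn⟩ := ha i
    exact ⟨-n, by simp [hn]⟩

instance intLattice_isClosed (d : ℕ) :
    IsClosed ((intLattice d : Set (EuclideanSpace ℝ (Fin d)))) := by
  have h : (intLattice d : Set (EuclideanSpace ℝ (Fin d))) =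
      ⋂ i, (fun v : EuclideanSpace ℝ (Fin d) => v i) ⁻¹' (Set.range ((↑) : ℤ → ℝ)) := by
    ext v
    simp only [Set.mem_iInter, Set.mem_preimage, Set.mem_range]
    constructor
    · intro hv i; obtain ⟨n, hn⟩ := hv i; exact ⟨n, hn.symm⟩
    · intro hv i; obtain ⟨n, hn⟩ := hv i; exact ⟨n, hn.symm⟩
  rw [h]
  exact isClosed_iInter fun i =>
    (Int.isClosedEmbedding_coe_real.isClosed_range).preimage
      (by first | fun_prop | exact (EuclideanSpace.proj i).continuous)

/-- The `d`-dimensional torus `𝕋^d = ℝ^d/ℤ^d`, with the quotient (flat) metric. -/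
abbrev Torus (d : ℕ) := EuclideanSpace ℝ (Fin d) ⧸ intLattice d

noncomputable instance (d : ℕ) : MeasurableSpace (Torus d) := borel _
instance (d : ℕ) : BorelSpace (Torus d) := ⟨rfl⟩

open MeasureTheory ProbabilityTheory

/-- The `2`-Wasserstein distance between two Borel measures. -/
noncomputable def W2 {X : Type*} [MeasurableSpace X] [PseudoMetricSpace X]
    (μ ν : Measure X) : ℝ :=
  Real.sqrt (sInf {r : ℝ | ∃ π : Measure (X × X),
    π.fst = μ ∧ π.snd = ν ∧ r = ∫ p, dist p.1 p.2 ^ 2 ∂π})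

/-- The shift operator `Ξ^τ(x,u,w) := (x + τw, u)`. -/
noncomputable def Xi {d : ℕ} {U : Type*} (τ : ℝ) :
    (Torus d × U) × EuclideanSpace ℝ (Fin d) → Torus d × U :=
  fun q => (q.1.1 + QuotientAddGroup.mk (τ • q.2), q.1.2)


section Aux
open MeasureTheory ProbabilityTheory

instance torus_compactSpace (d : ℕ) : CompactSpace (Torus d) := by
  have h : (QuotientAddGroup.mk '' (Metric.closedBall (0:EuclideanSpace ℝ (Fin d)) (Real.sqrt d)) : Set (Torus d)) = Set.univ := by
    apply Set.eq_univ_of_forall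
    intro x
    obtain ⟨v, rfl⟩ := QuotientAddGroup.mk_surjective x
    set w : EuclideanSpace ℝ (Fin d) := WithLp.toLp 2 (fun i => (round (v i) : ℝ)) with hw
    have hwmem : w ∈ intLattice d := fun i => ⟨round (v i), rfl⟩
    refine ⟨v - w, ?_, ?_⟩
    · rw [Metric.mem_closedBall, dist_zero_right]
      have : ‖v - w‖ ≤ Real.sqrt (d * 1) := by
        rw [EuclideanSpace.norm_eq]
        apply Real.sqrt_le_sqrt
        have hb : ∀ i, ‖(v - w) i‖ ^ 2 ≤ 1 := by
          intro i
          have h1 : |v i - round (v i)| ≤ 1/2 := (abs_sub_round (v i)).trans (by norm_num)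
          have : ‖(v-w) i‖ ≤ 1 := by
            simp only [PiLp.sub_apply, hw, PiLp.toLp_apply, Real.norm_eq_abs]
            exact h1.trans (by norm_num)
          nlinarith [norm_nonneg ((v-w) i)]
        calc ∑ i, ‖(v - w) i‖ ^ 2 ≤ ∑ _i : Fin d, (1:ℝ) := Finset.sum_le_sum (fun i _ => hb i)
          _ = d * 1 := by simp
      simpa using this
    · rw [QuotientAddGroup.mk_sub, (QuotientAddGroup.eq_zero_iff w).mpr hwmem, sub_zero]
  have hcpt : IsCompact (Set.univ : Set (Torus d)) := by
    rw [← h]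
    exact (isCompact_closedBall _ _).image continuous_quotient_mk'
  exact ⟨hcpt⟩

theorem marg_aux {X Y Z : Type*} [MeasurableSpace X] [MeasurableSpace Y] [MeasurableSpace Z]
    (μ : Measure (X × Y)) [IsFiniteMeasure μ] (κ : Kernel Y Z) [IsMarkovKernel κ] :
    (μ.compProd (κ.comap Prod.snd measurable_snd)).map (fun q => (q.1.2, q.2)) = μ.snd.compProd κ := by
  have hmeas : Measurable (fun q : (X × Y) × Z => (q.1.2, q.2)) :=
    (measurable_snd.comp measurable_fst).prodMk measurable_snd
  refine MeasureTheory.ext_of_generate_finite _ generateFrom_prod.symm isPiSystem_prod ?_ ?_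
  · rintro _ ⟨s, hs, t, ht, rfl⟩
    rw [Measure.map_apply hmeas (hs.prod ht)]
    have hpre : (fun q : (X × Y) × Z => (q.1.2, q.2)) ⁻¹' s ×ˢ t
        = (Prod.snd ⁻¹' s) ×ˢ t := by
      ext q; simp [Set.mem_prod]
    rw [hpre, Measure.compProd_apply_prod (measurable_snd hs) ht,
      Measure.compProd_apply_prod hs ht,
      Measure.snd, setLIntegral_map hs (Kernel.measurable_coe κ ht) measurable_snd]
    simp [Kernel.comap_apply]
  · rw [Measure.map_apply hmeas MeasurableSet.univ]
    simp [Measure.snd_univ]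

theorem xi_continuous {d : ℕ} {U : Type*} [TopologicalSpace U] (τ : ℝ) :
    Continuous (Xi (d := d) (U := U) τ) := by
  show Continuous fun q : (Torus d × U) × EuclideanSpace ℝ (Fin d) =>
    ((q.1.1 + (QuotientAddGroup.mk (τ • q.2) : Torus d), q.1.2) : Torus d × U)
  exact ((continuous_fst.fst).add
    ((((intLattice d).normedMk).continuous).comp (continuous_snd.const_smul τ))).prodMk continuous_fst.snd

end Aux

/-- Lemma on continuity of `Ξ`: Let `c > 0`, let `α, α'` be Borel probability
measures on `𝕋^d × U` with finite second moments, and `η` a probability on `𝕋^d × U × B_c`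
with marginal `α` on `𝕋^d × U`, disintegrated by a Markov kernel `κ` (i.e. `η = α ⊗ κ`).
Let `π` be an optimal `W₂`-plan between `α'` and `α` and `η' := π∗η` the composition.
Then for `τ, θ > 0`, `W₂(Ξ^τ_#η, Ξ^θ_#η') ≤ W₂(α,α') + |τ − θ|·c`. -/
theorem stmt7 {d : ℕ} {U : Type*} [MetricSpace U] [CompactSpace U]
    [MeasurableSpace U] [BorelSpace U]
    (c : ℝ) (hc : 0 < c)
    (α α' : Measure (Torus d × U)) [IsProbabilityMeasure α] [IsProbabilityMeasure α']
    (hα2 : ∀ z₀ : Torus d × U, ∫⁻ z, edist z z₀ ^ 2 ∂α < ⊤)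
    (hα'2 : ∀ z₀ : Torus d × U, ∫⁻ z, edist z z₀ ^ 2 ∂α' < ⊤)
    (η : Measure ((Torus d × U) × EuclideanSpace ℝ (Fin d))) [IsProbabilityMeasure η]
    (hηball : ∀ᵐ q ∂η, ‖q.2‖ ≤ c)
    (hηfst : η.fst = α)
    (κ : Kernel (Torus d × U) (EuclideanSpace ℝ (Fin d))) [IsMarkovKernel κ]
    (hκ : α.compProd κ = η)
    (τ θ : ℝ) (hτ : 0 < τ) (hθ : 0 < θ)
    (π : Measure ((Torus d × U) × (Torus d × U))) [IsProbabilityMeasure π]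
    (hπ1 : π.fst = α') (hπ2 : π.snd = α)
    (hπopt : ∀ π' : Measure ((Torus d × U) × (Torus d × U)),
      IsProbabilityMeasure π' → π'.fst = α' → π'.snd = α →
      ∫ p, dist p.1 p.2 ^ 2 ∂π ≤ ∫ p, dist p.1 p.2 ^ 2 ∂π') :
    W2 (η.map (Xi τ))
        (((π.compProd (κ.comap Prod.snd measurable_snd)).map
            (fun q : ((Torus d × U) × (Torus d × U)) × EuclideanSpace ℝ (Fin d) =>
              (q.1.1, q.2))).map (Xi θ))
      ≤ W2 α α' + |τ - θ| * c := by
  classical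
  set M := |τ - θ| * c with hM
  have hM0 : 0 ≤ M := mul_nonneg (abs_nonneg _) hc.le
  set κ₂ := κ.comap (Prod.snd : (Torus d × U) × (Torus d × U) → Torus d × U) measurable_snd
    with hκ₂
  set μ := π.compProd κ₂ with hμ
  have hμg : μ.map (fun q => (q.1.2, q.2)) = η := by
    rw [hμ, hκ₂, marg_aux, hπ2, hκ]
  set F : ((Torus d × U) × (Torus d × U)) × EuclideanSpace ℝ (Fin d) →
      (Torus d × U) × (Torus d × U) :=
    fun q => (Xi τ (q.1.2, q.2), Xi θ (q.1.1, q.2)) with hFdef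
  have hgmeas : Measurable (fun q : ((Torus d × U) × (Torus d × U)) × EuclideanSpace ℝ (Fin d)
      => (q.1.2, q.2)) := (measurable_snd.comp measurable_fst).prodMk measurable_snd
  have hhmeas : Measurable (fun q : ((Torus d × U) × (Torus d × U)) × EuclideanSpace ℝ (Fin d)
      => (q.1.1, q.2)) := (measurable_fst.comp measurable_fst).prodMk measurable_snd
  have hXiτ : Measurable (Xi (d := d) (U := U) τ) := (xi_continuous τ).measurable
  have hXiθ : Measurable (Xi (d := d) (U := U) θ) := (xi_continuous θ).measurable
  have hFmeas : Measurable F :=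
    ((hXiτ.comp hgmeas)).prodMk (hXiθ.comp hhmeas)
  set σ := μ.map F with hσ
  have hσfst : σ.fst = η.map (Xi τ) := by
    rw [hσ, Measure.fst, Measure.map_map measurable_fst hFmeas]
    rw [show (Prod.fst ∘ F) = (Xi τ) ∘ (fun q : ((Torus d × U) × (Torus d × U)) ×
        EuclideanSpace ℝ (Fin d) => (q.1.2, q.2)) from rfl]
    rw [← Measure.map_map hXiτ hgmeas, hμg]
  have hσsnd : σ.snd = (μ.map (fun q => (q.1.1, q.2))).map (Xi θ) := by
    rw [hσ, Measure.snd, Measure.map_map measurable_snd hFmeas]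
    rw [show (Prod.snd ∘ F) = (Xi θ) ∘ (fun q : ((Torus d × U) × (Torus d × U)) ×
        EuclideanSpace ℝ (Fin d) => (q.1.1, q.2)) from rfl]
    rw [← Measure.map_map hXiθ hhmeas]
  -- distance bound on the compact space
  obtain ⟨D₀, hD⟩ := Metric.isBounded_iff.mp (isCompact_univ (X := (Torus d × U))).isBounded
  set D := max D₀ 0 with hDdef
  have hDdist : ∀ z z' : Torus d × U, dist z z' ≤ D := fun z z' =>
    le_trans (hD trivial trivial) (le_max_left _ _)
  have hD0 : 0 ≤ D := le_max_right _ _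
  -- continuity of cost
  have hcost : Continuous (fun p : (Torus d × U) × (Torus d × U) => dist p.1 p.2 ^ 2) :=
    (continuous_fst.dist continuous_snd).pow 2
  -- a.e. ball bound transferred to μ
  have hball : ∀ᵐ q ∂μ, ‖q.2‖ ≤ c := by
    have hset : MeasurableSet {p : (Torus d × U) × EuclideanSpace ℝ (Fin d) | ‖p.2‖ ≤ c} :=
      (isClosed_le (continuous_norm.comp continuous_snd) continuous_const).measurableSet
    have := (ae_map_iff hgmeas.aemeasurable hset).mp (by rw [hμg]; exact hηball)
    exact this
  -- pointwise distance estimate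
  have hpt : ∀ᵐ q ∂μ, dist (F q).1 (F q).2 ^ 2 ≤ (dist q.1.1 q.1.2 + M) ^ 2 := by
    filter_upwards [hball] with q hq
    have h1 : dist (F q).1 (F q).2 ≤ dist q.1.1 q.1.2 + M := by
      obtain ⟨⟨⟨x', u'⟩, ⟨x, u⟩⟩, w⟩ := q
      simp only [hFdef, Xi, Prod.dist_eq] at *
      have htrans : dist (x + (QuotientAddGroup.mk (τ • w) : Torus d))
          (x' + QuotientAddGroup.mk (θ • w)) ≤ dist x x' + M := by
        have h2 : dist (x + (QuotientAddGroup.mk (τ • w) : Torus d))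
            (x' + QuotientAddGroup.mk (θ • w)) ≤ dist x x' +
            dist (QuotientAddGroup.mk (τ • w) : Torus d) (QuotientAddGroup.mk (θ • w)) :=
          dist_add_add_le _ _ _ _
        have h3 : dist (QuotientAddGroup.mk (τ • w) : Torus d)
            (QuotientAddGroup.mk (θ • w)) ≤ M := by
          rw [dist_eq_norm, ← QuotientAddGroup.mk_sub]
          have h4 : τ • w - θ • w = (τ - θ) • w := by rw [sub_smul]
          rw [h4]
          calc ‖(QuotientAddGroup.mk ((τ - θ) • w) : Torus d)‖ ≤ ‖(τ - θ) • w‖ :=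
                QuotientAddGroup.norm_mk_le_norm
            _ = |τ - θ| * ‖w‖ := by rw [norm_smul, Real.norm_eq_abs]
            _ ≤ |τ - θ| * c := by
                exact mul_le_mul_of_nonneg_left hq (abs_nonneg _)
        linarith
      calc max (dist (x + (QuotientAddGroup.mk (τ • w) : Torus d))
            (x' + QuotientAddGroup.mk (θ • w))) (dist u u')
          ≤ max (dist x x' + M) (dist u u' + M) := by
            apply max_le_max htrans (le_add_of_nonneg_right hM0)
        _ = max (dist x x') (dist u u') + M := by rw [max_add_add_right]
        _ = max (dist x' x) (dist u' u) + M := by rw [dist_comm x x', dist_comm u u']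
    exact pow_le_pow_left₀ dist_nonneg h1 2
  -- integrability of the majorant on μ
  have hintM : Integrable (fun q : ((Torus d × U) × (Torus d × U)) × EuclideanSpace ℝ (Fin d)
      => (dist q.1.1 q.1.2 + M) ^ 2) μ := by
    refine Integrable.mono' (integrable_const ((D + M) ^ 2))
      (((((continuous_fst.fst).dist (continuous_fst.snd)).add continuous_const).pow 2)).aestronglyMeasurable
      (ae_of_all _ fun q => ?_)
    rw [Real.norm_eq_abs, abs_of_nonneg (by positivity)]
    have := hDdist q.1.1 q.1.2
    have h0 : (0:ℝ) ≤ dist q.1.1 q.1.2 := dist_nonneg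
    nlinarith
  -- cost of σ
  have hstep1 : ∫ p, dist p.1 p.2 ^ 2 ∂σ = ∫ q, dist (F q).1 (F q).2 ^ 2 ∂μ := by
    rw [hσ, integral_map hFmeas.aemeasurable hcost.aestronglyMeasurable]
  have hstep2 : ∫ q, dist (F q).1 (F q).2 ^ 2 ∂μ ≤
      ∫ q, (dist q.1.1 q.1.2 + M) ^ 2 ∂μ :=
    integral_mono_of_nonneg (ae_of_all _ fun q => sq_nonneg _) hintM hpt
  have hstep3 : ∫ q, (dist q.1.1 q.1.2 + M) ^ 2 ∂μ = ∫ p, (dist p.1 p.2 + M) ^ 2 ∂π := by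
    have hfst : μ.map Prod.fst = π := by
      rw [hμ]; exact Measure.fst_compProd π κ₂
    rw [← hfst, integral_map (f := fun p : (Torus d × U) × (Torus d × U) => (dist p.1 p.2 + M) ^ 2) measurable_fst.aemeasurable
      (((continuous_fst.dist continuous_snd).add continuous_const).pow 2).aestronglyMeasurable]
  -- the optimal cost
  set A := ∫ p, dist p.1 p.2 ^ 2 ∂π with hA
  have hA0 : 0 ≤ A := integral_nonneg fun p => sq_nonneg _
  have hdint : Integrable (fun p : (Torus d × U) × (Torus d × U) => dist p.1 p.2) π := by
    refine Integrable.mono' (integrable_const D)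
      (continuous_fst.dist continuous_snd).aestronglyMeasurable (ae_of_all _ fun p => ?_)
    rw [Real.norm_eq_abs, abs_of_nonneg dist_nonneg]; exact hDdist _ _
  have hd2int : Integrable (fun p : (Torus d × U) × (Torus d × U) => dist p.1 p.2 ^ 2) π := by
    refine Integrable.mono' (integrable_const (D ^ 2)) hcost.aestronglyMeasurable
      (ae_of_all _ fun p => ?_)
    rw [Real.norm_eq_abs, abs_of_nonneg (sq_nonneg _)]
    exact pow_le_pow_left₀ dist_nonneg (hDdist _ _) 2
  have hCS : ∫ p, dist p.1 p.2 ∂π ≤ Real.sqrt A := by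
    have hmem : MemLp (fun p : (Torus d × U) × (Torus d × U) => dist p.1 p.2) 2 π := by
      refine MemLp.of_bound (continuous_fst.dist continuous_snd).aestronglyMeasurable D
        (ae_of_all _ fun p => ?_)
      rw [Real.norm_eq_abs, abs_of_nonneg dist_nonneg]; exact hDdist _ _
    have hv := variance_nonneg (fun p : (Torus d × U) × (Torus d × U) => dist p.1 p.2) π
    rw [variance_eq_sub hmem] at hv
    have hv2 : (∫ p, dist p.1 p.2 ∂π) ^ 2 ≤ A := by
      have : ∫ (x : (Torus d × U) × (Torus d × U)),
          ((fun p : (Torus d × U) × (Torus d × U) => dist p.1 p.2) ^ 2) x ∂π = A := by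
        rw [hA]; rfl
      linarith [hv, this]
    have hnn : 0 ≤ ∫ p, dist p.1 p.2 ∂π := integral_nonneg fun p => dist_nonneg
    exact (Real.le_sqrt hnn hA0).mpr hv2
  have hexp : ∫ p, (dist p.1 p.2 + M) ^ 2 ∂π ≤ (Real.sqrt A + M) ^ 2 := by
    have hEq : ∫ p, (dist p.1 p.2 + M) ^ 2 ∂π =
        A + ((2 * M) * ∫ p, dist p.1 p.2 ∂π + M ^ 2) := by
      have h1 : (fun p : (Torus d × U) × (Torus d × U) => (dist p.1 p.2 + M) ^ 2) =
          fun p => dist p.1 p.2 ^ 2 + ((2 * M) * dist p.1 p.2 + M ^ 2) := by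
        funext p; ring
      have hint2 : Integrable (fun p : (Torus d × U) × (Torus d × U) =>
          (2 * M) * dist p.1 p.2 + M ^ 2) π := by
        exact (hdint.const_mul (2 * M)).add (integrable_const _)
      have hint3 : Integrable (fun p : (Torus d × U) × (Torus d × U) =>
          (2 * M) * dist p.1 p.2) π := hdint.const_mul (2 * M)
      rw [h1, integral_add hd2int hint2, integral_add hint3 (integrable_const _),
        MeasureTheory.integral_const_mul, integral_const]
      simp [hA]
    rw [hEq]
    have hsq : Real.sqrt A ^ 2 = A := Real.sq_sqrt hA0
    nlinarith [hCS, hM0]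
  -- A ≤ sInf of the W2 α α' set
  have hAle : A ≤ sInf {r : ℝ | ∃ π' : Measure ((Torus d × U) × (Torus d × U)),
      π'.fst = α ∧ π'.snd = α' ∧ r = ∫ p, dist p.1 p.2 ^ 2 ∂π'} := by
    haveI : IsFiniteMeasure α' := inferInstance
    haveI : SigmaFinite α' := inferInstance
    haveI : SFinite α' := inferInstance
    apply le_csInf
    · exact ⟨∫ p, dist p.1 p.2 ^ 2 ∂(α.prod α'), α.prod α', Measure.fst_prod (μ := α) (ν := α'),
        Measure.snd_prod (μ := α) (ν := α'), rfl⟩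
    · rintro r ⟨σ', hσ'1, hσ'2, rfl⟩
      haveI hP : IsProbabilityMeasure σ' := by
        constructor
        rw [← Measure.fst_univ, hσ'1]
        exact measure_univ
      have hswap : (σ'.map Prod.swap).fst = α' ∧ (σ'.map Prod.swap).snd = α := by
        constructor
        · rw [Measure.fst, Measure.map_map measurable_fst measurable_swap]
          exact hσ'2
        · rw [Measure.snd, Measure.map_map measurable_snd measurable_swap]
          exact hσ'1
      haveI : IsProbabilityMeasure (σ'.map Prod.swap) :=
        Measure.isProbabilityMeasure_map measurable_swap.aemeasurable
      have := hπopt (σ'.map Prod.swap) inferInstance hswap.1 hswap.2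
      rw [integral_map measurable_swap.aemeasurable hcost.aestronglyMeasurable] at this
      simpa [dist_comm] using this
  -- membership of σ's cost in the LHS set
  haveI : IsProbabilityMeasure μ := by
    rw [hμ]; infer_instance
  haveI : IsProbabilityMeasure σ := Measure.isProbabilityMeasure_map hFmeas.aemeasurable
  have hmem' : (∫ p, dist p.1 p.2 ^ 2 ∂σ) ∈ {r : ℝ | ∃ π' :
      Measure (((Torus d × U)) × (Torus d × U)),
      π'.fst = η.map (Xi τ) ∧ π'.snd = (μ.map (fun q => (q.1.1, q.2))).map (Xi θ) ∧
      r = ∫ p, dist p.1 p.2 ^ 2 ∂π'} := ⟨σ, hσfst, hσsnd, rfl⟩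
  have hbdd : BddBelow {r : ℝ | ∃ π' : Measure (((Torus d × U)) × (Torus d × U)),
      π'.fst = η.map (Xi τ) ∧ π'.snd = (μ.map (fun q => (q.1.1, q.2))).map (Xi θ) ∧
      r = ∫ p, dist p.1 p.2 ^ 2 ∂π'} := by
    refine ⟨0, ?_⟩
    rintro r ⟨σ'', -, -, rfl⟩
    exact integral_nonneg fun p => sq_nonneg _
  rw [W2, W2]
  calc Real.sqrt (sInf {r : ℝ | ∃ π' : Measure (((Torus d × U)) × (Torus d × U)),
        π'.fst = η.map (Xi τ) ∧ π'.snd = (μ.map (fun q => (q.1.1, q.2))).map (Xi θ) ∧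
        r = ∫ p, dist p.1 p.2 ^ 2 ∂π'})
      ≤ Real.sqrt (∫ p, dist p.1 p.2 ^ 2 ∂σ) :=
        Real.sqrt_le_sqrt (csInf_le hbdd hmem')
    _ ≤ Real.sqrt ((Real.sqrt A + M) ^ 2) := by
        apply Real.sqrt_le_sqrt
        rw [hstep1]
        exact le_trans hstep2 (hstep3.le.trans hexp)
    _ = Real.sqrt A + M := Real.sqrt_sq (by positivity)
    _ ≤ W2 α α' + M := by
        rw [W2]
        exact add_le_add_left (Real.sqrt_le_sqrt hAle) M
end

section
/- Let x : [s,r] → ℝ^d be absolutely continuous and F(t,x) a compact convex set depending measurably on t and continuously on x, uniformly bounded. Then ẋ(t) ∈ F(t, x(t)) for a.e. t ∈ [s,r] if and only if for all s ≤ t' ≤ t'' ≤ r, x(t'') − x(t') ∈ ∫_{t'}^{t''} F(t, x(t)) dt (Aumann integral). -/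
open MeasureTheory Set Metric Filter Topology

section supportFn
variable {E : Type*} [NormedAddCommGroup E] [InnerProductSpace ℝ E]

/-- Approximate support function of a set via a countable dense sequence. -/
noncomputable def hsup (u : ℕ → E) (w : E) (K : Set E) : ℝ :=
  ⨆ n, ((inner ℝ w (u n) : ℝ) - ‖w‖ * Metric.infDist (u n) K)

lemma hsup_term_le {u : ℕ → E} {w : E} {K : Set E} (hK : IsCompact K) (hne : K.Nonempty)
    {M : ℝ} (hM : ∀ v ∈ K, (inner ℝ w v : ℝ) ≤ M) (n : ℕ) :
    (inner ℝ w (u n) : ℝ) - ‖w‖ * Metric.infDist (u n) K ≤ M := by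
  obtain ⟨v, hv, hd⟩ := hK.exists_infDist_eq_dist hne (u n)
  have h1 : (inner ℝ w (u n) : ℝ) - (inner ℝ w v : ℝ) ≤ ‖w‖ * Metric.infDist (u n) K := by
    have h2 : (inner ℝ w (u n - v) : ℝ) ≤ ‖w‖ * ‖u n - v‖ := real_inner_le_norm w (u n - v)
    rw [inner_sub_right] at h2
    rw [hd, dist_eq_norm]
    exact h2
  have := hM v hv
  linarith

lemma hsup_le {u : ℕ → E} {w : E} {K : Set E} (hK : IsCompact K) (hne : K.Nonempty)
    {M : ℝ} (hM : ∀ v ∈ K, (inner ℝ w v : ℝ) ≤ M) : hsup u w K ≤ M :=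
  ciSup_le (hsup_term_le hK hne hM)

lemma hsup_bddAbove {u : ℕ → E} {w : E} {K : Set E} (hK : IsCompact K) (hne : K.Nonempty) :
    BddAbove (Set.range fun n => (inner ℝ w (u n) : ℝ) - ‖w‖ * Metric.infDist (u n) K) := by
  have hcont : Continuous fun v : E => (inner ℝ w v : ℝ) := continuous_const.inner continuous_id
  obtain ⟨M, hM⟩ := (hK.image hcont).bddAbove
  refine ⟨M, ?_⟩
  rintro _ ⟨n, rfl⟩
  exact hsup_term_le hK hne (fun v hv => hM (Set.mem_image_of_mem _ hv)) n

lemma le_hsup {u : ℕ → E} (hu : DenseRange u) {w : E} {K : Set E}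
    (hK : IsCompact K) {v : E} (hv : v ∈ K) : (inner ℝ w v : ℝ) ≤ hsup u w K := by
  by_contra hlt
  push_neg at hlt
  set ε : ℝ := ((inner ℝ w v : ℝ) - hsup u w K) / 2 with hε
  have hεpos : 0 < ε := by simp [hε]; linarith
  have hδpos : 0 < ε / (2 * (‖w‖ + 1)) := by positivity
  set δ : ℝ := ε / (2 * (‖w‖ + 1)) with hδ
  obtain ⟨n, hn⟩ := hu.exists_dist_lt v hδpos
  have h1 : |(inner ℝ w (u n) : ℝ) - (inner ℝ w v : ℝ)| ≤ ‖w‖ * δ := by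
    rw [← inner_sub_right]
    calc |(inner ℝ w (u n - v) : ℝ)| ≤ ‖w‖ * ‖u n - v‖ := abs_real_inner_le_norm w _
    _ ≤ ‖w‖ * δ := by
        have : ‖u n - v‖ ≤ δ := by rw [← dist_eq_norm, dist_comm]; exact hn.le
        exact mul_le_mul_of_nonneg_left this (norm_nonneg w)
  have h2 : Metric.infDist (u n) K ≤ δ := by
    refine le_trans (Metric.infDist_le_dist_of_mem hv) ?_
    rw [dist_comm]; exact hn.le
  have h3 : (inner ℝ w v : ℝ) - 2 * (‖w‖ * δ) ≤ (inner ℝ w (u n) : ℝ) - ‖w‖ * Metric.infDist (u n) K := by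
    have := abs_le.1 h1
    have h4 : ‖w‖ * Metric.infDist (u n) K ≤ ‖w‖ * δ :=
      mul_le_mul_of_nonneg_left h2 (norm_nonneg w)
    linarith
  have h5 : (inner ℝ w (u n) : ℝ) - ‖w‖ * Metric.infDist (u n) K ≤ hsup u w K :=
    le_ciSup (hsup_bddAbove hK ⟨v, hv⟩) n
  have h6 : 2 * (‖w‖ * δ) < ε := by
    have hw1 : (0:ℝ) < ‖w‖ + 1 := by positivity
    have key : 2 * (‖w‖ * (ε / (2 * (‖w‖ + 1)))) = ε * ‖w‖ / (‖w‖ + 1) := by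
      field_simp
    rw [hδ, key, div_lt_iff₀ hw1]
    nlinarith [norm_nonneg w]
  linarith

end supportFn

lemma aeNonneg_of_intervalIntegral_nonneg {g : ℝ → ℝ} {s r : ℝ}
    (hg : IntegrableOn g (Set.Icc s r) volume)
    (h : ∀ t' t'', s ≤ t' → t' ≤ t'' → t'' ≤ r → 0 ≤ ∫ t in t'..t'', g t) :
    ∀ᵐ t ∂(volume.restrict (Set.Icc s r)), 0 ≤ g t := by
  set f : ℝ → ℝ := (Set.Icc s r).indicator g with hf
  have hfi : Integrable f volume := (integrable_indicator_iff measurableSet_Icc).2 hg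
  have key : ∀ᵐ t : ℝ ∂volume,
      Tendsto (fun ρ => ⨍ y in closedBall t ρ, f y) (𝓝[>] 0) (𝓝 (f t)) := by
    filter_upwards [(Besicovitch.vitaliFamily (volume : Measure ℝ)).ae_tendsto_average
      hfi.locallyIntegrable] with t ht
    exact ht.comp (Besicovitch.tendsto_filterAt volume t)
  have main : ∀ᵐ t : ℝ ∂volume, t ∈ Set.Ioo s r → 0 ≤ g t := by
    filter_upwards [key] with t ht htm
    have hft : f t = g t := Set.indicator_of_mem (Set.Ioo_subset_Icc_self htm) g
    rw [hft] at ht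
    refine ge_of_tendsto ht ?_
    have hεpos : 0 < min (t - s) (r - t) := by
      simp only [lt_min_iff, sub_pos]
      exact ⟨htm.1, htm.2⟩
    filter_upwards [Ioo_mem_nhdsGT_of_mem (Set.mem_Ico.2 ⟨le_refl (0:ℝ), hεpos⟩)] with ρ hρ
    have hsub : closedBall t ρ ⊆ Set.Icc s r := by
      rw [Real.closedBall_eq_Icc]
      have h1 := hρ.2
      have h2 : ρ < t - s := lt_of_lt_of_le h1 (min_le_left _ _)
      have h3 : ρ < r - t := lt_of_lt_of_le h1 (min_le_right _ _)
      exact Set.Icc_subset_Icc (by linarith) (by linarith)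
    have heq : ∫ y in closedBall t ρ, f y = ∫ y in (t - ρ)..(t + ρ), g y := by
      rw [setIntegral_congr_fun measurableSet_closedBall
        (fun y hy => Set.indicator_of_mem (hsub hy) g)]
      rw [Real.closedBall_eq_Icc, integral_Icc_eq_integral_Ioc,
        ← intervalIntegral.integral_of_le (by linarith [hρ.1.le] : t - ρ ≤ t + ρ)]
    rw [setAverage_eq, heq]
    have h2 : ρ < t - s := lt_of_lt_of_le hρ.2 (min_le_left _ _)
    have h3 : ρ < r - t := lt_of_lt_of_le hρ.2 (min_le_right _ _)
    exact smul_nonneg (by positivity) (h (t - ρ) (t + ρ) (by linarith) (by linarith [hρ.1.le]) (by linarith))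
  have hs' : ∀ᵐ t : ℝ ∂volume, t ≠ s := by
    rw [ae_iff]
    simp only [not_not, Set.setOf_eq_eq_singleton]
    exact measure_singleton s
  have hr' : ∀ᵐ t : ℝ ∂volume, t ≠ r := by
    rw [ae_iff]
    simp only [not_not, Set.setOf_eq_eq_singleton]
    exact measure_singleton r
  filter_upwards [ae_restrict_of_ae main, ae_restrict_of_ae hs', ae_restrict_of_ae hr',
    ae_restrict_mem measurableSet_Icc] with t hmain hts htr htIcc
  exact hmain ⟨lt_of_le_of_ne htIcc.1 (Ne.symm hts), lt_of_le_of_ne htIcc.2 htr⟩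

set_option maxHeartbeats 2000000

/-- The Aumann integral `∫_{t'}^{t''} G(t) dt` of a set-valued map: the set of values of
interval integrals of integrable selections of `G`. -/
def aumann {E : Type*} [NormedAddCommGroup E] [NormedSpace ℝ E]
    (G : ℝ → Set E) (t' t'' : ℝ) : Set E :=
  {y | ∃ φ : ℝ → E, (∀ t ∈ Set.uIcc t' t'', φ t ∈ G t) ∧
    IntervalIntegrable φ volume t' t'' ∧ y = ∫ t in t'..t'', φ t}

/-- Let `x : [s,r] → ℝ^d` be absolutely continuous (i.e. `x(t) = x(s) + ∫_s^t ẋ`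
with `ẋ` integrable) and `F(t,x)` a nonempty compact convex set, measurable in `t`,
continuous in `x`, uniformly bounded.  Then `ẋ(t) ∈ F(t, x(t))` for a.e. `t ∈ [s,r]` iff
for all `s ≤ t' ≤ t'' ≤ r`, `x(t'') − x(t') ∈ ∫_{t'}^{t''} F(t, x(t)) dt` (Aumann integral). -/
theorem stmt14 {d : ℕ} (s r : ℝ) (hsr : s ≤ r)
    (x xdot : ℝ → EuclideanSpace ℝ (Fin d))
    (hxdot : IntervalIntegrable xdot volume s r)
    (hx : ∀ t ∈ Set.Icc s r, x t = x s + ∫ τ in s..t, xdot τ)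
    (F : ℝ → EuclideanSpace ℝ (Fin d) → Set (EuclideanSpace ℝ (Fin d)))
    (hFc : ∀ t y, IsCompact (F t y)) (hFconv : ∀ t y, Convex ℝ (F t y))
    (hFne : ∀ t y, (F t y).Nonempty)
    (hFbd : ∃ c : ℝ, ∀ t y, F t y ⊆ Metric.closedBall 0 c)
    (hFmeas : ∀ (w : EuclideanSpace ℝ (Fin d)) (y : EuclideanSpace ℝ (Fin d)),
      Measurable fun t => Metric.infDist w (F t y))
    (hFcont : ∀ (t : ℝ) (w : EuclideanSpace ℝ (Fin d)),
      Continuous fun y => Metric.infDist w (F t y)) :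
    (∀ᵐ t ∂(volume.restrict (Set.Icc s r)), xdot t ∈ F t (x t)) ↔
      (∀ t' t'' : ℝ, s ≤ t' → t' ≤ t'' → t'' ≤ r →
        x t'' - x t' ∈ aumann (fun t => F t (x t)) t' t'') := by
  classical
  obtain ⟨c, hc⟩ := hFbd
  -- the increment of `x` is the interval integral of `xdot`
  have hincr : ∀ t' t'' : ℝ, s ≤ t' → t' ≤ t'' → t'' ≤ r →
      (IntervalIntegrable xdot volume t' t'' ∧ x t'' - x t' = ∫ t in t'..t'', xdot t) := by
    intro t' t'' h1 h2 h3
    have hi1 : IntervalIntegrable xdot volume s t' :=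
      hxdot.mono_set (by rw [Set.uIcc_of_le h1, Set.uIcc_of_le hsr]
                         exact Set.Icc_subset_Icc le_rfl (h2.trans h3))
    have hi2 : IntervalIntegrable xdot volume t' t'' :=
      hxdot.mono_set (by rw [Set.uIcc_of_le h2, Set.uIcc_of_le hsr]
                         exact Set.Icc_subset_Icc h1 h3)
    refine ⟨hi2, ?_⟩
    have hadd := intervalIntegral.integral_add_adjacent_intervals hi1 hi2
    rw [hx t'' ⟨h1.trans h2, h3⟩, hx t' ⟨h1, h2.trans h3⟩, ← hadd]
    abel
  constructor
  · -- forward direction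
    intro hae t' t'' h1 h2 h3
    obtain ⟨hi2, heq⟩ := hincr t' t'' h1 h2 h3
    set φ : ℝ → EuclideanSpace ℝ (Fin d) :=
      fun t => if xdot t ∈ F t (x t) then xdot t else (hFne t (x t)).choose with hφdef
    have hφmem : ∀ t, φ t ∈ F t (x t) := by
      intro t
      by_cases h : xdot t ∈ F t (x t)
      · simp only [hφdef, if_pos h]; exact h
      · simp only [hφdef, if_neg h]; exact (hFne t (x t)).choose_spec
    have hsub : Set.Ioc t' t'' ⊆ Set.Icc s r := fun y hy => ⟨h1.trans hy.1.le, hy.2.trans h3⟩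
    have hae2 : ∀ᵐ t ∂(volume : Measure ℝ), t ∈ Set.Icc s r → xdot t ∈ F t (x t) :=
      (ae_restrict_iff' measurableSet_Icc).1 hae
    have hmem2 : ∀ᵐ t ∂(volume : Measure ℝ), t ∈ Set.uIoc t' t'' → xdot t = φ t := by
      filter_upwards [hae2] with t h ht
      rw [Set.uIoc_of_le h2] at ht
      have hxF := h (hsub ht)
      simp only [hφdef, if_pos hxF]
    have hφint : IntervalIntegrable φ volume t' t'' :=
      hi2.congr_ae ((ae_restrict_iff' measurableSet_uIoc).2 hmem2)
    refine ⟨φ, fun t _ => hφmem t, hφint, ?_⟩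
    rw [heq]
    exact intervalIntegral.integral_congr_ae hmem2
  · -- backward direction
    intro H
    set u : ℕ → EuclideanSpace ℝ (Fin d) :=
      TopologicalSpace.denseSeq (EuclideanSpace ℝ (Fin d)) with hu_def
    have hu : DenseRange u := TopologicalSpace.denseRange_denseSeq _
    -- a globally continuous version of `x`
    set y : ℝ → EuclideanSpace ℝ (Fin d) := fun t => x s + ∫ τ in s..(max s (min t r)), xdot τ with hy_def
    have hclamp : ∀ t ∈ Set.Icc s r, max s (min t r) = t := by
      intro t ht
      rw [min_eq_left ht.2, max_eq_right ht.1]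
    have hyx : ∀ t ∈ Set.Icc s r, y t = x t := by
      intro t ht
      simp only [hy_def]
      rw [hclamp t ht]
      exact (hx t ht).symm
    have hycont : Continuous y := by
      have h1 : ContinuousOn (fun b => ∫ τ in s..b, xdot τ) (Set.uIcc s r) :=
        intervalIntegral.continuousOn_primitive_interval' hxdot Set.left_mem_uIcc
      have h2 : Continuous fun t : ℝ => max s (min t r) :=
        continuous_const.max (continuous_id.min continuous_const)
      refine continuous_const.add (h1.comp_continuous h2 fun t => ?_)
      rw [Set.uIcc_of_le hsr]
      exact ⟨le_max_left _ _, max_le hsr (min_le_right _ _)⟩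
    have hymeas : Measurable y := hycont.measurable
    -- measurability of the distance functions along `y`
    have hmeas_inf : ∀ p : EuclideanSpace ℝ (Fin d), Measurable fun t => Metric.infDist p (F t (y t)) := by
      intro p
      have hjoint : Measurable (Function.uncurry fun z t => Metric.infDist p (F t z)) :=
        measurable_uncurry_of_continuous_of_measurable
          (fun t => hFcont t p) (fun z => hFmeas p z)
      exact hjoint.comp (hymeas.prodMk measurable_id)
    have hGmeas : ∀ w : EuclideanSpace ℝ (Fin d), Measurable fun t => hsup u w (F t (y t)) := by
      intro w
      exact Measurable.iSup fun n =>
        measurable_const.sub ((hmeas_inf (u n)).const_mul ‖w‖)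
    have hc0 : 0 ≤ c := by
      obtain ⟨v, hv⟩ := hFne 0 0
      have hvc := hc 0 0 hv
      rw [Metric.mem_closedBall, dist_zero_right] at hvc
      exact le_trans (norm_nonneg v) hvc
    have hnormle : ∀ (t : ℝ) (z v : EuclideanSpace ℝ (Fin d)), v ∈ F t z → ‖v‖ ≤ c := by
      intro t z v hv
      have := hc t z hv
      rwa [Metric.mem_closedBall, dist_zero_right] at this
    have hGbound : ∀ (w : EuclideanSpace ℝ (Fin d)) (t : ℝ) (z : EuclideanSpace ℝ (Fin d)), |hsup u w (F t z)| ≤ c * ‖w‖ := by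
      intro w t z
      have hKc := hFc t z
      have hKne := hFne t z
      rw [abs_le]
      constructor
      · obtain ⟨v, hv⟩ := hKne
        refine le_trans ?_ (le_hsup hu hKc hv)
        have h1 := abs_real_inner_le_norm w v
        have h2 := hnormle t z v hv
        have := abs_le.1 h1
        nlinarith [norm_nonneg w]
      · refine hsup_le hKc hKne fun v hv => ?_
        have h1 := real_inner_le_norm w v
        have h2 := hnormle t z v hv
        nlinarith [norm_nonneg w]
    -- key inequality for each fixed direction `w`
    have keyw : ∀ w : EuclideanSpace ℝ (Fin d), ∀ᵐ t ∂(volume.restrict (Set.Icc s r)),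
        (inner ℝ w (xdot t) : ℝ) ≤ hsup u w (F t (y t)) := by
      intro w
      set G : ℝ → ℝ := fun t => hsup u w (F t (y t)) with hG_def
      have hGint : IntegrableOn G (Set.Icc s r) volume := by
        refine Integrable.mono' (integrable_const (c * ‖w‖))
          ((hGmeas w).aestronglyMeasurable) ?_
        exact Eventually.of_forall fun t => by
          rw [Real.norm_eq_abs]; exact hGbound w t (y t)
      have hxdotIcc : IntegrableOn xdot (Set.Icc s r) volume := by
        rw [integrableOn_Icc_iff_integrableOn_Ioc]
        simpa [Set.uIoc_of_le hsr] using hxdot.1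
      have hwx : IntegrableOn (fun t => (inner ℝ w (xdot t) : ℝ)) (Set.Icc s r) volume :=
        (innerSL ℝ w).integrable_comp hxdotIcc
      have hgint : IntegrableOn (fun t => G t - (inner ℝ w (xdot t) : ℝ)) (Set.Icc s r) volume :=
        hGint.sub hwx
      have hint : ∀ t' t'', s ≤ t' → t' ≤ t'' → t'' ≤ r →
          0 ≤ ∫ t in t'..t'', (G t - (inner ℝ w (xdot t) : ℝ)) := by
        intro t' t'' h1 h2 h3
        obtain ⟨hi2, heq⟩ := hincr t' t'' h1 h2 h3
        obtain ⟨φ, hφmem, hφint, hφeq⟩ := H t' t'' h1 h2 h3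
        have hIccsub : Set.Icc t' t'' ⊆ Set.Icc s r := Set.Icc_subset_Icc h1 h3
        have hGii : IntervalIntegrable G volume t' t'' := by
          refine IntegrableOn.intervalIntegrable ?_
          rw [Set.uIcc_of_le h2]
          exact hGint.mono_set hIccsub
        have hφw : IntervalIntegrable (fun t => (inner ℝ w (φ t) : ℝ)) volume t' t'' :=
          ⟨(innerSL ℝ w).integrable_comp hφint.1, (innerSL ℝ w).integrable_comp hφint.2⟩
        have hxw : IntervalIntegrable (fun t => (inner ℝ w (xdot t) : ℝ)) volume t' t'' :=
          ⟨(innerSL ℝ w).integrable_comp hi2.1, (innerSL ℝ w).integrable_comp hi2.2⟩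
        have hle : ∫ t in t'..t'', (inner ℝ w (φ t) : ℝ) ≤ ∫ t in t'..t'', G t := by
          refine intervalIntegral.integral_mono_on h2 hφw hGii fun t ht => ?_
          have htIcc : t ∈ Set.Icc s r := hIccsub ht
          have hm := hφmem t (by rw [Set.uIcc_of_le h2]; exact ht)
          have hm' : φ t ∈ F t (y t) := by rw [hyx t htIcc]; exact hm
          exact le_hsup hu (hFc t (y t)) hm'
        have hiq1 : ∫ t in t'..t'', (inner ℝ w (φ t) : ℝ) = (inner ℝ w (x t'' - x t') : ℝ) := by
          have := (innerSL ℝ w).intervalIntegral_comp_comm hφint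
          simp only [innerSL_apply_apply] at this
          rw [hφeq]
          exact this
        have hiq2 : ∫ t in t'..t'', (inner ℝ w (xdot t) : ℝ) = (inner ℝ w (x t'' - x t') : ℝ) := by
          have := (innerSL ℝ w).intervalIntegral_comp_comm hi2
          simp only [innerSL_apply_apply] at this
          rw [heq]
          exact this
        rw [intervalIntegral.integral_sub hGii hxw, hiq2, ← hiq1]
        linarith
      filter_upwards [aeNonneg_of_intervalIntegral_nonneg hgint hint] with t ht
      linarith
    have keyall : ∀ᵐ t ∂(volume.restrict (Set.Icc s r)),
        ∀ n : ℕ, (inner ℝ (u n) (xdot t) : ℝ) ≤ hsup u (u n) (F t (y t)) :=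
      ae_all_iff.2 fun n => keyw (u n)
    filter_upwards [keyall, ae_restrict_mem measurableSet_Icc] with t ht htIcc
    -- pointwise separation argument
    have hK := hFc t (x t)
    have hKconv := hFconv t (x t)
    have hKne := hFne t (x t)
    rw [hyx t htIcc] at ht
    by_contra hz
    obtain ⟨f, υ, hfb, hfz⟩ := geometric_hahn_banach_closed_point hKconv hK.isClosed hz
    set w₀ : EuclideanSpace ℝ (Fin d) :=
      (InnerProductSpace.toDual ℝ (EuclideanSpace ℝ (Fin d))).symm f with hw₀def
    have hw₀ : ∀ v : EuclideanSpace ℝ (Fin d), (inner ℝ w₀ v : ℝ) = f v := fun v =>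
      InnerProductSpace.toDual_symm_apply
    set gap : ℝ := f (xdot t) - υ with hgap
    have hgappos : 0 < gap := sub_pos.2 hfz
    have hDpos : (0:ℝ) < c + ‖xdot t‖ + 1 := by positivity
    set δ : ℝ := gap / (2 * (c + ‖xdot t‖ + 1)) with hδdef
    have hδpos : 0 < δ := by positivity
    obtain ⟨n, hn⟩ := hu.exists_dist_lt w₀ hδpos
    have hww : ‖u n - w₀‖ ≤ δ := by
      rw [← dist_eq_norm, dist_comm]; exact hn.le
    have h1 : f (xdot t) - δ * ‖xdot t‖ ≤ (inner ℝ (u n) (xdot t) : ℝ) := by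
      have habs : |(inner ℝ (u n) (xdot t) : ℝ) - (inner ℝ w₀ (xdot t) : ℝ)| ≤ δ * ‖xdot t‖ := by
        rw [← inner_sub_left]
        calc |(inner ℝ (u n - w₀) (xdot t) : ℝ)| ≤ ‖u n - w₀‖ * ‖xdot t‖ :=
              abs_real_inner_le_norm _ _
        _ ≤ δ * ‖xdot t‖ := mul_le_mul_of_nonneg_right hww (norm_nonneg _)
      have := abs_le.1 habs
      rw [hw₀ (xdot t)] at this
      linarith [this.1]
    have h2 : hsup u (u n) (F t (x t)) ≤ υ + δ * c := by
      refine hsup_le hK hKne fun v hv => ?_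
      have hsplit : (inner ℝ (u n) v : ℝ) = (inner ℝ w₀ v : ℝ) + (inner ℝ (u n - w₀) v : ℝ) := by
        rw [← inner_add_left]; congr 1; abel
      have habs : |(inner ℝ (u n - w₀) v : ℝ)| ≤ δ * c := by
        calc |(inner ℝ (u n - w₀) v : ℝ)| ≤ ‖u n - w₀‖ * ‖v‖ := abs_real_inner_le_norm _ _
        _ ≤ δ * c := mul_le_mul hww (hnormle t (x t) v hv) (norm_nonneg _) hδpos.le
      have hfv : f v < υ := hfb v hv
      rw [hsplit, hw₀ v]
      have := abs_le.1 habs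
      linarith [this.2]
    have h3 := ht n
    have hδD : δ * (c + ‖xdot t‖ + 1) = gap / 2 := by
      rw [hδdef]; field_simp
    nlinarith [norm_nonneg (xdot t), h1, h2, h3, hδpos]
end
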